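/- Let λ > 0 and η > 0 be real, let L be a natural number, and let a = (a_0,…,a_L) ∈ ℝ^{L+1}. Then ∑_{l=0}^{L} ∑_{h=0}^{∞} (λ^h/h!)·e^{−λ}·((η h)^l/l!)·e^{−η h}·a_l²·(l!)² = e^{−λ(1−e^{−η})}·∑_{l=0}^{L} a_l²·η^l·l!·T_l(λ·e^{−η}), where all series converge absolutely. (Probabilistically: if N ∼ Poisson(λ) and, conditionally on N = h, N′ ∼ Poisson(η h), then the left side equals 𝔼[(g_L(N′) − 1)²] for the estimator function g_L with g_L(j) = a_j·j! + 1 for j ≤ L and g_L(j) = 1 otherwise.) -/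

import Mathlib

open Real Finset

/-- Stirling numbers of the second kind: the number of partitions of an `n`-element set
into `r` nonempty blocks, via the standard recurrence. -/
def stirling2 : ℕ → ℕ → ℕ
  | 0, 0 => 1
  | 0, _ + 1 => 0
  | _ + 1, 0 => 0
  | n + 1, r + 1 => (r + 1) * stirling2 n (r + 1) + stirling2 n r

/-- The Touchard (Bell) polynomial `T_l(x) = ∑_{r=0}^{l} S(l,r) x^r`. -/
noncomputable def touchard (l : ℕ) (x : ℝ) : ℝ :=
  ∑ r ∈ Finset.range (l + 1), (stirling2 l r : ℝ) * x ^ r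

lemma stirling2_eq_zero : ∀ {l r : ℕ}, l < r → stirling2 l r = 0
  | 0, _ + 1, _ => rfl
  | l + 1, r + 1, h => by
    have h1 : l < r := Nat.lt_of_succ_lt_succ h
    show (r + 1) * stirling2 l (r + 1) + stirling2 l r = 0
    rw [stirling2_eq_zero h1, stirling2_eq_zero (Nat.lt_succ_of_lt h1), Nat.mul_zero]

lemma mul_descFactorial (n r : ℕ) :
    n * n.descFactorial r = n.descFactorial (r + 1) + r * n.descFactorial r := by
  rw [Nat.descFactorial_succ]
  rcases le_or_gt r n with h | h
  · rw [← Nat.add_mul]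
    congr 1
    omega
  · rw [Nat.descFactorial_of_lt h]
    simp

lemma pow_eq_sum_desc (l n : ℕ) :
    n ^ l = ∑ r ∈ Finset.range (l + 1), stirling2 l r * n.descFactorial r := by
  induction l with
  | zero => simp [stirling2]
  | succ l ih =>
    have key : ∑ r ∈ Finset.range (l + 1), (r + 1) * stirling2 l (r + 1) *
        n.descFactorial (r + 1) = ∑ r ∈ Finset.range (l + 1), r * stirling2 l r *
        n.descFactorial r := by
      have h1 : ∑ r ∈ Finset.range (l + 2), r * stirling2 l r * n.descFactorial r
          = ∑ r ∈ Finset.range (l + 1), (r + 1) * stirling2 l (r + 1) *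
            n.descFactorial (r + 1) + 0 * stirling2 l 0 * n.descFactorial 0 :=
        Finset.sum_range_succ' _ (l + 1)
      have h2 : ∑ r ∈ Finset.range (l + 2), r * stirling2 l r * n.descFactorial r
          = ∑ r ∈ Finset.range (l + 1), r * stirling2 l r * n.descFactorial r +
            (l + 1) * stirling2 l (l + 1) * n.descFactorial (l + 1) :=
        Finset.sum_range_succ _ (l + 1)
      rw [stirling2_eq_zero (Nat.lt_succ_self l)] at h2
      simp only [Nat.mul_zero, Nat.zero_mul, Nat.add_zero] at h1 h2
      omega
    calc n ^ (l + 1) = n * n ^ l := by ring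
      _ = ∑ r ∈ Finset.range (l + 1), stirling2 l r * (n * n.descFactorial r) := by
          rw [ih, Finset.mul_sum]; apply Finset.sum_congr rfl; intros; ring
      _ = ∑ r ∈ Finset.range (l + 1), (stirling2 l r * n.descFactorial (r + 1) +
            r * stirling2 l r * n.descFactorial r) := by
          apply Finset.sum_congr rfl; intro r _; rw [mul_descFactorial]; ring
      _ = ∑ r ∈ Finset.range (l + 1), (stirling2 l r * n.descFactorial (r + 1) +
            (r + 1) * stirling2 l (r + 1) * n.descFactorial (r + 1)) := by
          rw [Finset.sum_add_distrib, Finset.sum_add_distrib, key]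
      _ = ∑ r ∈ Finset.range (l + 2), stirling2 (l + 1) r * n.descFactorial r := by
          rw [Finset.sum_range_succ' (fun r => stirling2 (l + 1) r * n.descFactorial r) (l + 1)]
          show _ = _ + stirling2 (l + 1) 0 * n.descFactorial 0
          simp only [show ∀ m, stirling2 (m + 1) 0 = 0 from fun m => rfl, Nat.zero_mul,
            Nat.add_zero]
          apply Finset.sum_congr rfl
          intro r _
          show _ = ((r + 1) * stirling2 l (r + 1) + stirling2 l r) * n.descFactorial (r + 1)
          ring

lemma hasSum_desc (x : ℝ) (r : ℕ) :
    HasSum (fun h : ℕ => x ^ h / (Nat.factorial h : ℝ) * (h.descFactorial r : ℝ))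
      (x ^ r * Real.exp x) := by
  have hexp : HasSum (fun k : ℕ => x ^ k / (Nat.factorial k : ℝ)) (Real.exp x) := by
    rw [Real.exp_eq_exp_ℝ]
    exact NormedSpace.expSeries_div_hasSum_exp x
  have hshift : HasSum (fun k : ℕ => x ^ (k + r) / (Nat.factorial (k + r) : ℝ) *
      ((k + r).descFactorial r : ℝ)) (x ^ r * Real.exp x) := by
    have heq : ∀ k : ℕ, x ^ (k + r) / (Nat.factorial (k + r) : ℝ) *
        ((k + r).descFactorial r : ℝ) = x ^ r * (x ^ k / (Nat.factorial k : ℝ)) := by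
      intro k
      have hfac : (Nat.factorial k : ℝ) * ((k + r).descFactorial r : ℝ) =
          (Nat.factorial (k + r) : ℝ) := by
        rw [← Nat.cast_mul, ← Nat.factorial_mul_descFactorial (Nat.le_add_left r k),
          Nat.add_sub_cancel]
      have hk : (Nat.factorial k : ℝ) ≠ 0 := Nat.cast_ne_zero.mpr (Nat.factorial_ne_zero k)
      have hkr : (Nat.factorial (k + r) : ℝ) ≠ 0 :=
        Nat.cast_ne_zero.mpr (Nat.factorial_ne_zero (k + r))
      field_simp
      rw [← hfac, pow_add]
      ring
    simp only [heq]
    exact hexp.mul_left _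
  have hinj : Function.Injective (fun k : ℕ => k + r) := fun a b h => by simpa using h
  rw [← Function.Injective.hasSum_iff hinj]
  · exact hshift
  · intro h hh
    have : h < r := by
      by_contra hc
      exact hh ⟨h - r, by simp; omega⟩
    rw [Nat.descFactorial_of_lt this]
    simp

lemma hasSum_dobinski (x : ℝ) (l : ℕ) :
    HasSum (fun h : ℕ => x ^ h / (Nat.factorial h : ℝ) * (h : ℝ) ^ l)
      (Real.exp x * touchard l x) := by
  have heq : ∀ h : ℕ, x ^ h / (Nat.factorial h : ℝ) * (h : ℝ) ^ l =
      ∑ r ∈ Finset.range (l + 1), (stirling2 l r : ℝ) *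
        (x ^ h / (Nat.factorial h : ℝ) * (h.descFactorial r : ℝ)) := by
    intro h
    have := pow_eq_sum_desc l h
    have hcast : ((h : ℝ)) ^ l = ∑ r ∈ Finset.range (l + 1),
        (stirling2 l r : ℝ) * (h.descFactorial r : ℝ) := by
      rw [← Nat.cast_pow, this]
      push_cast
      rfl
    rw [hcast, Finset.mul_sum]
    apply Finset.sum_congr rfl; intros; ring
  simp only [heq]
  have : HasSum (fun h : ℕ => ∑ r ∈ Finset.range (l + 1), (stirling2 l r : ℝ) *
      (x ^ h / (Nat.factorial h : ℝ) * (h.descFactorial r : ℝ)))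
      (∑ r ∈ Finset.range (l + 1), (stirling2 l r : ℝ) * (x ^ r * Real.exp x)) :=
    hasSum_sum fun r _ => (hasSum_desc x r).mul_left _
  convert this using 1
  rw [touchard, Finset.mul_sum]
  apply Finset.sum_congr rfl; intros; ring

theorem stmt_11 (lam eta : ℝ) (hlam : 0 < lam) (heta : 0 < eta)
    (L : ℕ) (a : Fin (L + 1) → ℝ) :
    (∀ l : Fin (L + 1), Summable (fun h : ℕ =>
      |lam ^ h / (Nat.factorial h : ℝ) * Real.exp (-lam) *
        ((eta * h) ^ (l : ℕ) / (Nat.factorial (l : ℕ) : ℝ)) * Real.exp (-(eta * h)) *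
        ((a l) ^ 2 * ((Nat.factorial (l : ℕ) : ℝ)) ^ 2)|)) ∧
    ∑ l : Fin (L + 1), ∑' h : ℕ,
        lam ^ h / (Nat.factorial h : ℝ) * Real.exp (-lam) *
          ((eta * h) ^ (l : ℕ) / (Nat.factorial (l : ℕ) : ℝ)) * Real.exp (-(eta * h)) *
          ((a l) ^ 2 * ((Nat.factorial (l : ℕ) : ℝ)) ^ 2) =
      Real.exp (-lam * (1 - Real.exp (-eta))) *
        ∑ l : Fin (L + 1), (a l) ^ 2 * eta ^ (l : ℕ) * (Nat.factorial (l : ℕ) : ℝ) *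
          touchard (l : ℕ) (lam * Real.exp (-eta)) := by
  set x : ℝ := lam * Real.exp (-eta) with hx
  have hterm : ∀ (l : ℕ) (c : ℝ) (h : ℕ),
      lam ^ h / (Nat.factorial h : ℝ) * Real.exp (-lam) *
        ((eta * h) ^ l / (Nat.factorial l : ℝ)) * Real.exp (-(eta * h)) *
        (c ^ 2 * ((Nat.factorial l : ℝ)) ^ 2) =
      (Real.exp (-lam) * (c ^ 2 * eta ^ l * (Nat.factorial l : ℝ))) *
        (x ^ h / (Nat.factorial h : ℝ) * (h : ℝ) ^ l) := by
    intro l c h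
    have hl : (Nat.factorial l : ℝ) ≠ 0 := Nat.cast_ne_zero.mpr (Nat.factorial_ne_zero l)
    have hexph : Real.exp (-(eta * h)) = (Real.exp (-eta)) ^ h := by
      rw [← Real.exp_nat_mul]
      ring_nf
    rw [hexph, hx, mul_pow, mul_pow]
    field_simp
  have hsum : ∀ l : Fin (L + 1), HasSum (fun h : ℕ =>
      lam ^ h / (Nat.factorial h : ℝ) * Real.exp (-lam) *
        ((eta * h) ^ (l : ℕ) / (Nat.factorial (l : ℕ) : ℝ)) * Real.exp (-(eta * h)) *
        ((a l) ^ 2 * ((Nat.factorial (l : ℕ) : ℝ)) ^ 2))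
      ((Real.exp (-lam) * ((a l) ^ 2 * eta ^ (l : ℕ) * (Nat.factorial (l : ℕ) : ℝ))) *
        (Real.exp x * touchard (l : ℕ) x)) := by
    intro l
    simp only [hterm (l : ℕ) (a l)]
    exact (hasSum_dobinski x (l : ℕ)).mul_left _
  constructor
  · intro l
    apply (hsum l).summable.abs
  · have hval : ∀ l : Fin (L + 1), (∑' h : ℕ,
        lam ^ h / (Nat.factorial h : ℝ) * Real.exp (-lam) *
          ((eta * h) ^ (l : ℕ) / (Nat.factorial (l : ℕ) : ℝ)) * Real.exp (-(eta * h)) *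
          ((a l) ^ 2 * ((Nat.factorial (l : ℕ) : ℝ)) ^ 2)) =
        (Real.exp (-lam) * ((a l) ^ 2 * eta ^ (l : ℕ) * (Nat.factorial (l : ℕ) : ℝ))) *
          (Real.exp x * touchard (l : ℕ) x) := fun l => (hsum l).tsum_eq
    simp only [hval]
    rw [Finset.mul_sum]
    apply Finset.sum_congr rfl
    intro l _
    have hexpe : Real.exp (-lam) * Real.exp x = Real.exp (-lam * (1 - Real.exp (-eta))) := by
      rw [← Real.exp_add]
      congr 1
      rw [hx]
      ring
    calc Real.exp (-lam) * ((a l) ^ 2 * eta ^ (l : ℕ) * (Nat.factorial (l : ℕ) : ℝ)) *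
          (Real.exp x * touchard (l : ℕ) x)
        = (Real.exp (-lam) * Real.exp x) * ((a l) ^ 2 * eta ^ (l : ℕ) *
            (Nat.factorial (l : ℕ) : ℝ) * touchard (l : ℕ) x) := by ring
      _ = _ := by rw [hexpe]
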